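/- Let m be a positive integer, let E_1, …, E_m be real inner product spaces, and for each pair (k, i) with 1 ≤ k ≤ i ≤ m let g_i^{(k)} ∈ E_k, with every dominant gradient g_k^{(k)} nonzero. Let α_1, …, α_m be strictly positive real numbers such that for every k < i ≤ m with ⟨g_i^{(k)}, g_k^{(k)}⟩ < 0 one has α_i ≤ (α_k / (k − m)) · ‖g_k^{(k)}‖² / ⟨g_i^{(k)}, g_k^{(k)}⟩. Then for every k with 1 ≤ k ≤ m the total gradient g^{(k)} = Σ_{i=k}^{m} α_i g_i^{(k)} satisfies ⟨g^{(k)}, g_k^{(k)}⟩ ≥ 0; that is, the update of every nested parameter W^{(k)} is align-domination. (The guarantee of the Dominance-Aware Dynamic Weighting strategy, combining the paper's Propositions 1–2 with Eq. (8).) -/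

import Mathlib

open RealInnerProductSpace

/-- The guarantee of the Dominance-Aware Dynamic Weighting strategy: if the
strictly positive weights `α` satisfy the bound
`α i ≤ (α k / (k - m)) * ‖g k k‖² / ⟪g k i, g k k⟫` whenever `k < i ≤ m` and
`⟪g k i, g k k⟫ < 0`, then every nested parameter `W^{(k)}` is updated in an
align-domination manner: `⟪∑_{i=k}^m α i • g k i, g k k⟫ ≥ 0`. Here `g k i`
denotes `g_i^{(k)} ∈ E k` and `g k k` is the dominant gradient. -/
theorem dominance_aware_weighting_align_domination
    {E : ℕ → Type*} [∀ k, NormedAddCommGroup (E k)]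
    [∀ k, InnerProductSpace ℝ (E k)]
    (m : ℕ) (hm : 0 < m)
    (g : (k : ℕ) → ℕ → E k)
    (hdom : ∀ k, 1 ≤ k → k ≤ m → g k k ≠ 0)
    (α : ℕ → ℝ) (hα : ∀ i, 1 ≤ i → i ≤ m → 0 < α i)
    (hbound : ∀ k i, 1 ≤ k → k < i → i ≤ m →
      ⟪g k i, g k k⟫ < 0 →
        α i ≤ (α k / ((k : ℝ) - (m : ℝ))) * ‖g k k‖ ^ 2 / ⟪g k i, g k k⟫) :
    ∀ k, 1 ≤ k → k ≤ m →
      0 ≤ ⟪∑ i ∈ Finset.Icc k m, α i • g k i, g k k⟫ := by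
  intro k hk1 hkm
  have hC : 0 < α k * ‖g k k‖ ^ 2 := by
    have h1 := hα k hk1 hkm
    have hg : 0 < ‖g k k‖ := norm_pos_iff.mpr (hdom k hk1 hkm)
    positivity
  set C := α k * ‖g k k‖ ^ 2 with hCdef
  rw [sum_inner]
  have hsplit : Finset.Icc k m = insert k (Finset.Icc (k+1) m) := by
    rw [Finset.Icc_add_one_left_eq_Ioc, ← Finset.Ioc_insert_left hkm]
  rw [hsplit, Finset.sum_insert (by simp)]
  have hterm : ∀ i ∈ Finset.Icc (k+1) m,
      -(C / ((m : ℝ) - (k : ℝ))) ≤ ⟪α i • g k i, g k k⟫ := by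
    intro i hi
    simp only [Finset.mem_Icc] at hi
    have hki : k < i := hi.1
    have him : i ≤ m := hi.2
    have hkm' : k < m := lt_of_lt_of_le hki him
    have hmk : (0:ℝ) < (m : ℝ) - (k : ℝ) := by
      have : (k:ℝ) < m := by exact_mod_cast hkm'
      linarith
    rw [real_inner_smul_left]
    set c := ⟪g k i, g k k⟫ with hc
    rcases le_or_gt 0 c with hc0 | hc0
    · have h1 : 0 ≤ α i * c := mul_nonneg (hα i (by omega) him).le hc0
      have h2 : 0 < C / ((m:ℝ) - k) := div_pos hC hmk
      linarith
    · have hb := hbound k i hk1 hki him hc0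
      have h3 : α i * c ≥ (α k / ((k : ℝ) - (m : ℝ))) * ‖g k k‖ ^ 2 / c * c := by
        exact mul_le_mul_of_nonpos_right hb hc0.le
      have h4 : (α k / ((k : ℝ) - (m : ℝ))) * ‖g k k‖ ^ 2 / c * c
          = (α k / ((k : ℝ) - (m : ℝ))) * ‖g k k‖ ^ 2 :=
        div_mul_cancel₀ _ hc0.ne
      have h5 : (α k / ((k : ℝ) - (m : ℝ))) * ‖g k k‖ ^ 2
          = -(C / ((m : ℝ) - (k : ℝ))) := by
        have hne : (k:ℝ) - m ≠ 0 := by linarith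
        have hne2 : (m:ℝ) - k ≠ 0 := by linarith
        rw [hCdef]
        field_simp
        ring
      rw [h4, h5] at h3
      linarith
  have hsum : -(C) ≤ ∑ i ∈ Finset.Icc (k+1) m, ⟪α i • g k i, g k k⟫ := by
    rcases eq_or_lt_of_le hkm with heq | hlt
    · subst heq
      simp [Finset.Icc_eq_empty_of_lt (Nat.lt_succ_self k)]
      linarith
    · have hcard : (Finset.Icc (k+1) m).card = m - k := by
        rw [Nat.card_Icc]; omega
      have := Finset.sum_le_sum hterm
      rw [Finset.sum_const, hcard, nsmul_eq_mul] at this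
      have hmk : (0:ℝ) < (m : ℝ) - (k : ℝ) := by
        have : (k:ℝ) < m := by exact_mod_cast hlt
        linarith
      have hcast : ((m - k : ℕ) : ℝ) = (m : ℝ) - (k : ℝ) := by
        push_cast [Nat.cast_sub hlt.le]; ring
      rw [hcast] at this
      calc -(C) = ((m:ℝ) - k) * (-(C / ((m : ℝ) - (k : ℝ)))) := by
            field_simp
          _ ≤ _ := this
  have hfirst : ⟪α k • g k k, g k k⟫ = C := by
    rw [real_inner_smul_left, real_inner_self_eq_norm_sq]
  rw [hfirst]
  linarith
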